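/- Let Ξ, Γ, Γ' be quivers, and suppose Ξ is connected: Ξ has at least one vertex, and the equivalence relation on vertices of Ξ generated by 'there exists an arrow from a to b' is total. Let Γ ⊕ Γ' denote the disjoint-union quiver on the sum of the vertex types, with the arrows of Γ between left vertices, the arrows of Γ' between right vertices, and no arrows between the two summands. Then every functor F : Paths Ξ ⥤ Paths (Γ ⊕ Γ') factors through exactly one of the two functors Paths Γ ⥤ Paths (Γ ⊕ Γ') and Paths Γ' ⥤ Paths (Γ ⊕ Γ') induced by the inclusion prefunctors; consequently the set of functors Paths Ξ ⥤ Paths (Γ ⊕ Γ') is in bijection with the disjoint union of the set of functors Paths Ξ ⥤ Paths Γ and the set of functors Paths Ξ ⥤ Paths Γ'. -/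

import Mathlib

open CategoryTheory

universe w v u₁ u₂ u₃

variable {Γ : Type u₂} {Γ' : Type u₃}

/-- The disjoint-union quiver on `Γ ⊕ Γ'`: arrows of `Γ` between left vertices, arrows of
`Γ'` between right vertices, and no arrows between the two summands. -/
instance sumQuiver [Quiver.{v} Γ] [Quiver.{v} Γ'] : Quiver.{v} (Γ ⊕ Γ') where
  Hom a b :=
    match a, b with
    | .inl x, .inl y => x ⟶ y
    | .inr x, .inr y => x ⟶ y
    | .inl _, .inr _ => PEmpty.{v + 1}
    | .inr _, .inl _ => PEmpty.{v + 1}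

/-- The inclusion prefunctor of the left summand. -/
def inlPre [Quiver.{v} Γ] [Quiver.{v} Γ'] : Γ ⥤q (Γ ⊕ Γ') where
  obj := Sum.inl
  map e := e

/-- The inclusion prefunctor of the right summand. -/
def inrPre [Quiver.{v} Γ] [Quiver.{v} Γ'] : Γ' ⥤q (Γ ⊕ Γ') where
  obj := Sum.inr
  map e := e

/-- The functor between free categories induced by the left inclusion prefunctor. -/
def inlF [Quiver.{v} Γ] [Quiver.{v} Γ'] : Paths Γ ⥤ Paths (Γ ⊕ Γ') :=
  Paths.lift (inlPre.comp (Paths.of (Γ ⊕ Γ')))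

/-- The functor between free categories induced by the right inclusion prefunctor. -/
def inrF [Quiver.{v} Γ] [Quiver.{v} Γ'] : Paths Γ' ⥤ Paths (Γ ⊕ Γ') :=
  Paths.lift (inrPre.comp (Paths.of (Γ ⊕ Γ')))

section Aux

variable [Quiver.{v} Γ] [Quiver.{v} Γ']

/-- One step of left-path extraction. -/
def unlStep {a : Γ} : ∀ {c v : Γ ⊕ Γ'}, (c ⟶ v) →
    (Σ' b : Γ, Quiver.Path a b ×' (c = Sum.inl b)) →
    Σ' b' : Γ, Quiver.Path a b' ×' (v = Sum.inl b')
  | _, Sum.inl v', e, ⟨_, q, rfl⟩ => ⟨v', q.cons e, rfl⟩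
  | _, Sum.inr _, e, ⟨_, _, rfl⟩ => e.elim

/-- Extraction of a `Γ`-path from a path in the sum quiver starting at a left vertex. -/
def unl' {a : Γ} : ∀ {v : Γ ⊕ Γ'}, Quiver.Path (Sum.inl a : Γ ⊕ Γ') v →
    Σ' b : Γ, Quiver.Path a b ×' (v = Sum.inl b)
  | _, .nil => ⟨a, .nil, rfl⟩
  | _, .cons p e => unlStep e (unl' p)

theorem unl'_mapPath {a : Γ} : ∀ {b : Γ} (q : Quiver.Path a b),
    unl' ((inlPre (Γ := Γ) (Γ' := Γ')).mapPath q) = ⟨b, q, rfl⟩ := by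
  intro b q
  induction q with
  | nil => rfl
  | cons p e ih =>
    rw [Prefunctor.mapPath_cons]
    show unlStep _ (unl' _) = _
    rw [ih]
    rfl

theorem mapPath_unl' {a : Γ} : ∀ {v : Γ ⊕ Γ'} (p : Quiver.Path (Sum.inl a : Γ ⊕ Γ') v),
    HEq ((inlPre (Γ := Γ) (Γ' := Γ')).mapPath (unl' p).2.1) p := by
  intro v p
  induction p with
  | nil => exact HEq.rfl
  | cons p e ih =>
    rename_i c v'
    rcases h : unl' p with ⟨b, q, hb⟩
    subst hb
    rw [h] at ih
    have hq : (inlPre (Γ := Γ) (Γ' := Γ')).mapPath q = p := eq_of_heq ih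
    show HEq ((inlPre (Γ := Γ) (Γ' := Γ')).mapPath (unlStep e (unl' p)).2.1) _
    rw [h]
    cases v' with
    | inl w =>
      show HEq ((inlPre (Γ := Γ) (Γ' := Γ')).mapPath (q.cons e)) _
      rw [Prefunctor.mapPath_cons, hq]
      exact HEq.rfl
    | inr w => exact e.elim

/-- Full extraction of a `Γ`-path. -/
def unlFull {a b : Γ} (p : Quiver.Path (Sum.inl a : Γ ⊕ Γ') (Sum.inl b)) : Quiver.Path a b :=
  match unl' p with
  | ⟨_, q, rfl⟩ => q

theorem unlFull_mapPath {a b : Γ} (q : Quiver.Path a b) :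
    unlFull ((inlPre (Γ := Γ) (Γ' := Γ')).mapPath q) = q := by
  unfold unlFull; erw [unl'_mapPath]; rfl

theorem mapPath_unlFull {a b : Γ} (p : Quiver.Path (Sum.inl a : Γ ⊕ Γ') (Sum.inl b)) :
    (inlPre (Γ := Γ) (Γ' := Γ')).mapPath (unlFull p) = p := by
  have key := mapPath_unl' p
  rcases h : unl' p with ⟨b', q, hb⟩
  cases Sum.inl.inj hb
  have h' : unl' p = ⟨b, q, rfl⟩ := h
  rw [h'] at key
  simp only [unlFull, h']
  exact eq_of_heq key

theorem inlF_map {x y : Γ} (q : Quiver.Path x y) :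
    (inlF (Γ := Γ) (Γ' := Γ')).map (X := x) (Y := y) q =
      (inlPre (Γ := Γ) (Γ' := Γ')).mapPath q := by
  induction q with
  | nil => rfl
  | cons p e ih =>
    show (Paths.lift _).map (Quiver.Path.cons p e) = _
    rw [Paths.lift_cons, Prefunctor.mapPath_cons]
    rw [show (Paths.lift (inlPre.comp (Paths.of (Γ ⊕ Γ')))).map p = (inlF (Γ := Γ) (Γ' := Γ')).map p from rfl,
      ih]
    rfl

theorem unlFull_comp {a b c : Γ}
    (p : Quiver.Path (Sum.inl a : Γ ⊕ Γ') (Sum.inl b))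
    (q : Quiver.Path (Sum.inl b : Γ ⊕ Γ') (Sum.inl c)) :
    unlFull (@CategoryStruct.comp (Paths (Γ ⊕ Γ')) _ (Sum.inl a) (Sum.inl b) (Sum.inl c) p q) =
      @CategoryStruct.comp (Paths Γ) _ a b c (unlFull p) (unlFull q) := by
  have key : Quiver.Path.comp p q =
      (inlPre (Γ := Γ) (Γ' := Γ')).mapPath ((unlFull p).comp (unlFull q)) := by
    rw [Prefunctor.mapPath_comp, mapPath_unlFull, mapPath_unlFull]
    rfl
  show unlFull (p.comp q) = (unlFull p).comp (unlFull q)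
  rw [key, unlFull_mapPath]

theorem unlFull_eqToHom {a b : Γ} (h : (Sum.inl a : Γ ⊕ Γ') = Sum.inl b) :
    unlFull (@eqToHom (Paths (Γ ⊕ Γ')) _ (Sum.inl a) (Sum.inl b) h) =
      @eqToHom (Paths Γ) _ a b (Sum.inl.inj h) := by
  cases Sum.inl.inj h
  exact unlFull_mapPath Quiver.Path.nil

theorem unlFull_sandwich {a a' b b' : Γ} (h₁ : (Sum.inl a : Γ ⊕ Γ') = Sum.inl a')
    (h₂ : (Sum.inl b : Γ ⊕ Γ') = Sum.inl b')
    (p : Quiver.Path (Sum.inl a' : Γ ⊕ Γ') (Sum.inl b)) :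
    unlFull (@CategoryStruct.comp (Paths (Γ ⊕ Γ')) _ (Sum.inl a) (Sum.inl a') (Sum.inl b')
        (eqToHom h₁)
        (@CategoryStruct.comp (Paths (Γ ⊕ Γ')) _ (Sum.inl a') (Sum.inl b) (Sum.inl b') p
          (eqToHom h₂))) =
      @CategoryStruct.comp (Paths Γ) _ a a' b'
        (eqToHom (Sum.inl.inj h₁))
        (@CategoryStruct.comp (Paths Γ) _ a' b b' (unlFull p) (eqToHom (Sum.inl.inj h₂))) := by
  rw [unlFull_comp, unlFull_comp, unlFull_eqToHom, unlFull_eqToHom]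

theorem factor_left {Ξ : Type u₁} [Quiver.{w} Ξ] (F : Paths Ξ ⥤ Paths (Γ ⊕ Γ'))
    (h : ∀ x : Paths Ξ, ∃ a : Γ, F.obj x = Sum.inl a) :
    ∃ G : Paths Ξ ⥤ Paths Γ, F = G ⋙ inlF := by
  choose o ho using h
  refine ⟨{ obj := o,
            map := fun {x y} f =>
              unlFull (eqToHom (ho x).symm ≫ F.map f ≫ eqToHom (ho y)),
            map_id := ?_, map_comp := ?_ }, ?_⟩
  · intro x
    show unlFull (eqToHom (ho x).symm ≫ F.map (𝟙 x) ≫ eqToHom (ho x)) = @CategoryStruct.id (Paths Γ) _ (o x)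
    erw [CategoryTheory.Functor.map_id, Category.id_comp, eqToHom_trans, unlFull_eqToHom,
      eqToHom_refl]
  · intro x y z f g
    show unlFull (eqToHom (ho x).symm ≫ F.map (f ≫ g) ≫ eqToHom (ho z)) =
      @CategoryStruct.comp (Paths Γ) _ (o x) (o y) (o z)
        (unlFull (eqToHom (ho x).symm ≫ F.map f ≫ eqToHom (ho y)))
        (unlFull (eqToHom (ho y).symm ≫ F.map g ≫ eqToHom (ho z)))
    rw [CategoryTheory.Functor.map_comp,
      show eqToHom (ho x).symm ≫ (F.map f ≫ F.map g) ≫ eqToHom (ho z) =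
        (eqToHom (ho x).symm ≫ F.map f ≫ eqToHom (ho y)) ≫
          (eqToHom (ho y).symm ≫ F.map g ≫ eqToHom (ho z)) by erw [Category.assoc, Category.assoc, Category.assoc, eqToHom_trans_assoc, eqToHom_refl, Category.id_comp],
      unlFull_comp]
  · have hobj : F.obj = fun x => Sum.inl (o x) := funext fun x => ho x
    apply Paths.ext_functor hobj
    intro a b e
    erw [Functor.comp_map,
      show (inlF (Γ := Γ) (Γ' := Γ')).map _ =
        (inlPre (Γ := Γ) (Γ' := Γ')).mapPath
          (unlFull (eqToHom (ho a).symm ≫ F.map e.toPath ≫ eqToHom (ho b))) from inlF_map _,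
      mapPath_unlFull]
    erw [Category.assoc, eqToHom_trans_assoc, eqToHom_refl, Category.id_comp, Category.assoc, eqToHom_trans, eqToHom_refl, Category.comp_id]

theorem comp_inlF_inj {Ξ : Type u₁} [Quiver.{w} Ξ] {G₁ G₂ : Paths Ξ ⥤ Paths Γ}
    (h : G₁ ⋙ inlF (Γ' := Γ') = G₂ ⋙ inlF) : G₁ = G₂ := by
  have hobj : ∀ x : Paths Ξ, G₁.obj x = G₂.obj x := fun x =>
    Sum.inl.inj (Functor.congr_obj h x)
  apply Paths.ext_functor (funext hobj)
  intro a b e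
  have key := Functor.congr_hom h e.toPath
  erw [Functor.comp_map, Functor.comp_map, inlF_map, inlF_map] at key
  have step1 : G₁.map e.toPath =
      unlFull ((inlPre (Γ := Γ) (Γ' := Γ')).mapPath (G₁.map e.toPath)) :=
    (unlFull_mapPath _).symm
  erw [step1, key, unlFull_sandwich (h₁ := Functor.congr_obj h a)
      (h₂ := (Functor.congr_obj h b).symm), unlFull_mapPath]

-- Right-side mirror


/-- One step of left-path extraction. -/
def unrStep {a : Γ'} : ∀ {c v : Γ ⊕ Γ'}, (c ⟶ v) →
    (Σ' b : Γ', Quiver.Path a b ×' (c = Sum.inr b)) →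
    Σ' b' : Γ', Quiver.Path a b' ×' (v = Sum.inr b')
  | _, Sum.inr v', e, ⟨_, q, rfl⟩ => ⟨v', q.cons e, rfl⟩
  | _, Sum.inl _, e, ⟨_, _, rfl⟩ => e.elim

/-- Extraction of a `Γ'`-path from a path in the sum quiver starting at a left vertex. -/
def unr' {a : Γ'} : ∀ {v : Γ ⊕ Γ'}, Quiver.Path (Sum.inr a : Γ ⊕ Γ') v →
    Σ' b : Γ', Quiver.Path a b ×' (v = Sum.inr b)
  | _, .nil => ⟨a, .nil, rfl⟩
  | _, .cons p e => unrStep e (unr' p)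

theorem unr'_mapPath {a : Γ'} : ∀ {b : Γ'} (q : Quiver.Path a b),
    unr' ((inrPre (Γ := Γ) (Γ' := Γ')).mapPath q) = ⟨b, q, rfl⟩ := by
  intro b q
  induction q with
  | nil => rfl
  | cons p e ih =>
    rw [Prefunctor.mapPath_cons]
    show unrStep _ (unr' _) = _
    rw [ih]
    rfl

theorem mapPath_unr' {a : Γ'} : ∀ {v : Γ ⊕ Γ'} (p : Quiver.Path (Sum.inr a : Γ ⊕ Γ') v),
    HEq ((inrPre (Γ := Γ) (Γ' := Γ')).mapPath (unr' p).2.1) p := by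
  intro v p
  induction p with
  | nil => exact HEq.rfl
  | cons p e ih =>
    rename_i c v'
    rcases h : unr' p with ⟨b, q, hb⟩
    subst hb
    rw [h] at ih
    have hq : (inrPre (Γ := Γ) (Γ' := Γ')).mapPath q = p := eq_of_heq ih
    show HEq ((inrPre (Γ := Γ) (Γ' := Γ')).mapPath (unrStep e (unr' p)).2.1) _
    rw [h]
    cases v' with
    | inr w =>
      show HEq ((inrPre (Γ := Γ) (Γ' := Γ')).mapPath (q.cons e)) _
      rw [Prefunctor.mapPath_cons, hq]
      exact HEq.rfl
    | inl w => exact e.elim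

/-- Full extraction of a `Γ'`-path. -/
def unrFull {a b : Γ'} (p : Quiver.Path (Sum.inr a : Γ ⊕ Γ') (Sum.inr b)) : Quiver.Path a b :=
  match unr' p with
  | ⟨_, q, rfl⟩ => q

theorem unrFull_mapPath {a b : Γ'} (q : Quiver.Path a b) :
    unrFull ((inrPre (Γ := Γ) (Γ' := Γ')).mapPath q) = q := by
  unfold unrFull; erw [unr'_mapPath]; rfl

theorem mapPath_unrFull {a b : Γ'} (p : Quiver.Path (Sum.inr a : Γ ⊕ Γ') (Sum.inr b)) :
    (inrPre (Γ := Γ) (Γ' := Γ')).mapPath (unrFull p) = p := by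
  have key := mapPath_unr' p
  rcases h : unr' p with ⟨b', q, hb⟩
  cases Sum.inr.inj hb
  have h' : unr' p = ⟨b, q, rfl⟩ := h
  rw [h'] at key
  simp only [unrFull, h']
  exact eq_of_heq key

theorem inrF_map {x y : Γ'} (q : Quiver.Path x y) :
    (inrF (Γ := Γ) (Γ' := Γ')).map (X := x) (Y := y) q =
      (inrPre (Γ := Γ) (Γ' := Γ')).mapPath q := by
  induction q with
  | nil => rfl
  | cons p e ih =>
    show (Paths.lift _).map (Quiver.Path.cons p e) = _
    rw [Paths.lift_cons, Prefunctor.mapPath_cons]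
    rw [show (Paths.lift (inrPre.comp (Paths.of (Γ ⊕ Γ')))).map p = (inrF (Γ := Γ) (Γ' := Γ')).map p from rfl,
      ih]
    rfl

theorem unrFull_comp {a b c : Γ'}
    (p : Quiver.Path (Sum.inr a : Γ ⊕ Γ') (Sum.inr b))
    (q : Quiver.Path (Sum.inr b : Γ ⊕ Γ') (Sum.inr c)) :
    unrFull (@CategoryStruct.comp (Paths (Γ ⊕ Γ')) _ (Sum.inr a) (Sum.inr b) (Sum.inr c) p q) =
      @CategoryStruct.comp (Paths Γ') _ a b c (unrFull p) (unrFull q) := by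
  have key : Quiver.Path.comp p q =
      (inrPre (Γ := Γ) (Γ' := Γ')).mapPath ((unrFull p).comp (unrFull q)) := by
    rw [Prefunctor.mapPath_comp, mapPath_unrFull, mapPath_unrFull]
    rfl
  show unrFull (p.comp q) = (unrFull p).comp (unrFull q)
  rw [key, unrFull_mapPath]

theorem unrFull_eqToHom {a b : Γ'} (h : (Sum.inr a : Γ ⊕ Γ') = Sum.inr b) :
    unrFull (@eqToHom (Paths (Γ ⊕ Γ')) _ (Sum.inr a) (Sum.inr b) h) =
      @eqToHom (Paths Γ') _ a b (Sum.inr.inj h) := by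
  cases Sum.inr.inj h
  exact unrFull_mapPath Quiver.Path.nil

theorem unrFull_sandwich {a a' b b' : Γ'} (h₁ : (Sum.inr a : Γ ⊕ Γ') = Sum.inr a')
    (h₂ : (Sum.inr b : Γ ⊕ Γ') = Sum.inr b')
    (p : Quiver.Path (Sum.inr a' : Γ ⊕ Γ') (Sum.inr b)) :
    unrFull (@CategoryStruct.comp (Paths (Γ ⊕ Γ')) _ (Sum.inr a) (Sum.inr a') (Sum.inr b')
        (eqToHom h₁)
        (@CategoryStruct.comp (Paths (Γ ⊕ Γ')) _ (Sum.inr a') (Sum.inr b) (Sum.inr b') p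
          (eqToHom h₂))) =
      @CategoryStruct.comp (Paths Γ') _ a a' b'
        (eqToHom (Sum.inr.inj h₁))
        (@CategoryStruct.comp (Paths Γ') _ a' b b' (unrFull p) (eqToHom (Sum.inr.inj h₂))) := by
  rw [unrFull_comp, unrFull_comp, unrFull_eqToHom, unrFull_eqToHom]

theorem factor_right {Ξ : Type u₁} [Quiver.{w} Ξ] (F : Paths Ξ ⥤ Paths (Γ ⊕ Γ'))
    (h : ∀ x : Paths Ξ, ∃ a : Γ', F.obj x = Sum.inr a) :
    ∃ G : Paths Ξ ⥤ Paths Γ', F = G ⋙ inrF := by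
  choose o ho using h
  refine ⟨{ obj := o,
            map := fun {x y} f =>
              unrFull (eqToHom (ho x).symm ≫ F.map f ≫ eqToHom (ho y)),
            map_id := ?_, map_comp := ?_ }, ?_⟩
  · intro x
    show unrFull (eqToHom (ho x).symm ≫ F.map (𝟙 x) ≫ eqToHom (ho x)) = @CategoryStruct.id (Paths Γ') _ (o x)
    erw [CategoryTheory.Functor.map_id, Category.id_comp, eqToHom_trans, unrFull_eqToHom,
      eqToHom_refl]
  · intro x y z f g
    show unrFull (eqToHom (ho x).symm ≫ F.map (f ≫ g) ≫ eqToHom (ho z)) =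
      @CategoryStruct.comp (Paths Γ') _ (o x) (o y) (o z)
        (unrFull (eqToHom (ho x).symm ≫ F.map f ≫ eqToHom (ho y)))
        (unrFull (eqToHom (ho y).symm ≫ F.map g ≫ eqToHom (ho z)))
    rw [CategoryTheory.Functor.map_comp,
      show eqToHom (ho x).symm ≫ (F.map f ≫ F.map g) ≫ eqToHom (ho z) =
        (eqToHom (ho x).symm ≫ F.map f ≫ eqToHom (ho y)) ≫
          (eqToHom (ho y).symm ≫ F.map g ≫ eqToHom (ho z)) by erw [Category.assoc, Category.assoc, Category.assoc, eqToHom_trans_assoc, eqToHom_refl, Category.id_comp],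
      unrFull_comp]
  · have hobj : F.obj = fun x => Sum.inr (o x) := funext fun x => ho x
    apply Paths.ext_functor hobj
    intro a b e
    erw [Functor.comp_map,
      show (inrF (Γ := Γ) (Γ' := Γ')).map _ =
        (inrPre (Γ := Γ) (Γ' := Γ')).mapPath
          (unrFull (eqToHom (ho a).symm ≫ F.map e.toPath ≫ eqToHom (ho b))) from inrF_map _,
      mapPath_unrFull]
    erw [Category.assoc, eqToHom_trans_assoc, eqToHom_refl, Category.id_comp, Category.assoc, eqToHom_trans, eqToHom_refl, Category.comp_id]

theorem comp_inrF_inj {Ξ : Type u₁} [Quiver.{w} Ξ] {G₁ G₂ : Paths Ξ ⥤ Paths Γ'}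
    (h : G₁ ⋙ inrF (Γ := Γ) = G₂ ⋙ inrF) : G₁ = G₂ := by
  have hobj : ∀ x : Paths Ξ, G₁.obj x = G₂.obj x := fun x =>
    Sum.inr.inj (Functor.congr_obj h x)
  apply Paths.ext_functor (funext hobj)
  intro a b e
  have key := Functor.congr_hom h e.toPath
  erw [Functor.comp_map, Functor.comp_map, inrF_map, inrF_map] at key
  have step1 : G₁.map e.toPath =
      unrFull ((inrPre (Γ := Γ) (Γ' := Γ')).mapPath (G₁.map e.toPath)) :=
    (unrFull_mapPath _).symm
  erw [step1, key, unrFull_sandwich (h₁ := Functor.congr_obj h a)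
      (h₂ := (Functor.congr_obj h b).symm), unrFull_mapPath]


end Aux

theorem path_isLeft [Quiver.{v} Γ] [Quiver.{v} Γ'] :
    ∀ {u v : Γ ⊕ Γ'} (_ : Quiver.Path u v), u.isLeft = v.isLeft := by
  intro u v p
  induction p with
  | nil => rfl
  | cons p e ih =>
    rename_i c v'
    refine ih.trans ?_
    cases c with
    | inl x =>
      cases v' with
      | inl y => rfl
      | inr y => exact e.elim
    | inr x =>
      cases v' with
      | inl y => exact e.elim
      | inr y => rfl

/-- If `Ξ` is a connected quiver (nonempty, with the equivalence relation
generated by "there is an arrow from `a` to `b`" total), then every functor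
`Paths Ξ ⥤ Paths (Γ ⊕ Γ')` factors through exactly one of the two inclusion-induced
functors, and consequently the functors `Paths Ξ ⥤ Paths (Γ ⊕ Γ')` are in bijection with
the disjoint union of the functors into `Paths Γ` and those into `Paths Γ'`. -/
theorem stmt_6 {Ξ : Type u₁} [Quiver.{w} Ξ] [Quiver.{v} Γ] [Quiver.{v} Γ']
    (hne : Nonempty Ξ)
    (hconn : ∀ a b : Ξ, Relation.EqvGen (fun x y : Ξ => Nonempty (x ⟶ y)) a b) :
    (∀ F : Paths Ξ ⥤ Paths (Γ ⊕ Γ'),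
      Xor' (∃ G : Paths Ξ ⥤ Paths Γ, F = G ⋙ inlF)
           (∃ G' : Paths Ξ ⥤ Paths Γ', F = G' ⋙ inrF)) ∧
    Nonempty ((Paths Ξ ⥤ Paths (Γ ⊕ Γ')) ≃
      ((Paths Ξ ⥤ Paths Γ) ⊕ (Paths Ξ ⥤ Paths Γ'))) := by
  obtain ⟨x₀⟩ := hne
  have key : ∀ F : Paths Ξ ⥤ Paths (Γ ⊕ Γ'),
      Xor' (∃ G : Paths Ξ ⥤ Paths Γ, F = G ⋙ inlF)
           (∃ G' : Paths Ξ ⥤ Paths Γ', F = G' ⋙ inrF) := by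
    intro F
    have hside : ∀ x y : Ξ, (F.obj x).isLeft = (F.obj y).isLeft := by
      intro x y
      induction (hconn x y) with
      | rel a b hab => exact path_isLeft (F.map hab.some.toPath)
      | refl a => rfl
      | symm a b _ ih => exact ih.symm
      | trans a b c _ _ ih1 ih2 => exact ih1.trans ih2
    rcases hx0 : F.obj x₀ with a₀ | a₀
    · have hL : ∀ x : Paths Ξ, ∃ a : Γ, F.obj x = Sum.inl a := by
        intro x
        have hx := hside x x₀
        rw [hx0] at hx
        rcases hFx : F.obj x with a | a
        · exact ⟨a, rfl⟩
        · rw [hFx] at hx; simp at hx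
      obtain ⟨G, hG⟩ := factor_left F hL
      refine Or.inl ⟨⟨G, hG⟩, ?_⟩
      rintro ⟨G', hG'⟩
      rw [hG'] at hx0
      have : Sum.inr (G'.obj x₀) = Sum.inl a₀ := hx0
      exact absurd this (by simp)
    · have hR : ∀ x : Paths Ξ, ∃ a : Γ', F.obj x = Sum.inr a := by
        intro x
        have hx := hside x x₀
        rw [hx0] at hx
        rcases hFx : F.obj x with a | a
        · rw [hFx] at hx; simp at hx
        · exact ⟨a, rfl⟩
      obtain ⟨G, hG⟩ := factor_right F hR
      refine Or.inr ⟨⟨G, hG⟩, ?_⟩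
      rintro ⟨G', hG'⟩
      rw [hG'] at hx0
      have : Sum.inl (G'.obj x₀) = Sum.inr a₀ := hx0
      exact absurd this (by simp)
  refine ⟨key, ⟨(Equiv.ofBijective (Sum.elim (· ⋙ inlF) (· ⋙ inrF)) ⟨?_, ?_⟩).symm⟩⟩
  · rintro (G₁ | G₁) (G₂ | G₂) h
    · exact congrArg Sum.inl (comp_inlF_inj h)
    · exfalso
      have : Sum.inl (G₁.obj x₀) = Sum.inr (G₂.obj x₀) := Functor.congr_obj h x₀
      exact absurd this (by simp)
    · exfalso
      have : Sum.inr (G₁.obj x₀) = Sum.inl (G₂.obj x₀) := Functor.congr_obj h x₀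
      exact absurd this (by simp)
    · exact congrArg Sum.inr (comp_inrF_inj h)
  · intro F
    rcases key F with ⟨⟨G, hG⟩, -⟩ | ⟨⟨G, hG⟩, -⟩
    · exact ⟨Sum.inl G, hG.symm⟩
    · exact ⟨Sum.inr G, hG.symm⟩
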